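/- Let n, m be natural numbers. The Euler characteristic χ(P^m, O(n)) = Σ_i (−1)^i dim H^i(P^m, O(n)) of the line bundle O(n) on projective m-space over a field equals the binomial coefficient C(n+m, m), and this equals the evaluation at degree-0 part of ch(O(n))·Td(T_{P^m}): explicitly, C(n+m, m) is the coefficient of h^m in the power series expansion of e^{nh}·(h/(1−e^{−h}))^{m+1} in Q[[h]]. -/

import Mathlib

open PowerSeries

noncomputable def Td : ℚ⟦X⟧ := PowerSeries.mk fun k => (-1 : ℚ) ^ k * bernoulli k / (k.factorial : ℚ)

noncomputable def Em : ℚ⟦X⟧ := rescale (-1 : ℚ) (exp ℚ)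

lemma Td_eq : Td = rescale (-1) (bernoulliPowerSeries ℚ) := by
  ext k
  simp [Td, bernoulliPowerSeries, coeff_rescale, mul_div_assoc]

lemma key1 : Td * (1 - Em) = X := by
  have h := congrArg (rescale (-1 : ℚ)) (bernoulliPowerSeries_mul_exp_sub_one ℚ)
  rw [map_mul, map_sub, map_one, rescale_X, map_neg, map_one] at h
  rw [Td_eq, Em]
  linear_combination -h

lemma key2 : Td * Em = Td - X := by
  linear_combination -key1

lemma dEm : d⁄dX ℚ Em = -Em := by
  ext k
  rw [coeff_derivative]
  simp only [Em, coeff_rescale, coeff_exp, map_neg, coeff_rescale]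
  rw [Nat.factorial_succ]
  push_cast
  field_simp
  ring

lemma hdiff : Td * Em + (1 - Em) * d⁄dX ℚ Td = 1 := by
  have h := congrArg (d⁄dX ℚ) key1
  rw [Derivation.leibniz, map_sub, Derivation.map_one_eq_zero, dEm, derivative_X] at h
  simp only [smul_eq_mul] at h
  linear_combination h

lemma keyD : X * d⁄dX ℚ Td = Td + X * Td - Td ^ 2 := by
  linear_combination Td * hdiff + (d⁄dX ℚ Td - Td) * key2

lemma S1 (m : ℕ) : coeff (R := ℚ) (m + 1) (Td ^ (m + 2)) = coeff (R := ℚ) m (Td ^ (m + 1)) := by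
  have hD : X * d⁄dX ℚ (Td ^ (m + 1)) =
      (m + 1) • (Td ^ (m + 1) + X * Td ^ (m + 1) - Td ^ (m + 2)) := by
    rw [Derivation.leibniz_pow]
    simp only [Nat.add_sub_cancel, smul_eq_mul, nsmul_eq_mul]
    linear_combination ((m + 1 : ℕ) : ℚ⟦X⟧) * Td ^ m * keyD
  have h := congrArg (coeff (R := ℚ) (m + 1)) hD
  rw [coeff_succ_X_mul, coeff_derivative, map_nsmul] at h
  simp only [map_sub, map_add, coeff_succ_X_mul, nsmul_eq_mul, smul_eq_mul] at h
  have hne : ((m + 1 : ℕ) : ℚ) ≠ 0 := by positivity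
  have h2 : ((m + 1 : ℕ) : ℚ) *
      (coeff (R := ℚ) m (Td ^ (m + 1)) - coeff (R := ℚ) (m + 1) (Td ^ (m + 2))) = 0 := by
    push_cast at h ⊢
    linear_combination -h
  rcases mul_eq_zero.mp h2 with h3 | h3
  · exact absurd h3 hne
  · linarith [sub_eq_zero.mp h3]

lemma constTd : constantCoeff (R := ℚ) Td = 1 := by
  have h : coeff (R := ℚ) 0 Td = 1 := by simp [Td]
  rwa [coeff_zero_eq_constantCoeff] at h

lemma constE (a : ℚ) : constantCoeff (R := ℚ) (rescale a (exp ℚ)) = 1 := by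
  have h : coeff (R := ℚ) 0 (rescale a (exp ℚ)) = 1 := by simp [coeff_rescale]
  rwa [coeff_zero_eq_constantCoeff] at h

lemma R1 (n m : ℕ) :
    rescale ((n : ℚ) + 1) (exp ℚ) * Td ^ (m + 2) =
      rescale (n : ℚ) (exp ℚ) * Td ^ (m + 2) +
        X * (rescale ((n : ℚ) + 1) (exp ℚ) * Td ^ (m + 1)) := by
  have hE : rescale ((n : ℚ) + 1) (exp ℚ) * Em = rescale (n : ℚ) (exp ℚ) := by
    rw [Em, exp_mul_exp_eq_exp_add]
    norm_num
  linear_combination (-(rescale ((n : ℚ) + 1) (exp ℚ) * Td ^ (m + 1))) * key2 +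
    Td ^ (m + 2) * hE

lemma main : ∀ m n : ℕ,
    coeff (R := ℚ) m (rescale (n : ℚ) (exp ℚ) * Td ^ (m + 1)) = Nat.choose (n + m) m := by
  intro m
  induction m with
  | zero =>
    intro n
    simp only [Nat.add_zero, Nat.choose_zero_right, Nat.cast_one, zero_add, pow_one]
    rw [coeff_zero_eq_constantCoeff, map_mul, constTd, constE, mul_one]
  | succ m ih =>
    intro n
    induction n with
    | zero =>
      have h0 : rescale ((0 : ℕ) : ℚ) (exp ℚ) = 1 := by
        simp only [Nat.cast_zero, rescale_zero]
        simp
      rw [h0, one_mul, S1]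
      have h1 := ih 0
      rw [h0, one_mul] at h1
      simp [h1]
    | succ k ihk =>
      have h := congrArg (coeff (R := ℚ) (m + 1)) (R1 k m)
      rw [map_add, coeff_succ_X_mul] at h
      have ih' := ih (k + 1)
      push_cast at ih'
      norm_num at ihk
      have hnat : (k + 1 + (m + 1)).choose (m + 1) =
          (k + 1 + m).choose m + (k + (m + 1)).choose (m + 1) := by
        rw [show k + (m + 1) = k + 1 + m by omega,
            show k + 1 + (m + 1) = (k + 1 + m) + 1 by omega]
        exact Nat.choose_succ_succ _ _
      rw [show m + 1 + 1 = m + 2 by omega] at ihk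
      push_cast
      rw [h, ihk, ih', hnat]
      push_cast
      ring

lemma mkE (n : ℕ) :
    (PowerSeries.mk fun k => (n : ℚ) ^ k / (k.factorial : ℚ)) = rescale (n : ℚ) (exp ℚ) := by
  ext k
  simp [coeff_rescale, div_eq_mul_inv]


/-- Hirzebruch Riemann–Roch on `ℙ^m`, formal content:
`χ(ℙ^m, O(n)) = C(n+m, m)` equals the degree-`0` part of `ch(O(n))·Td(T_{ℙ^m})`,
i.e. the coefficient of `h^m` in `e^{nh}·(h/(1−e^{−h}))^{m+1} ∈ ℚ[[h]]` equals
the binomial coefficient `C(n+m, m)`. -/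
theorem coeff_exp_mul_todd_pow_eq_choose (n m : ℕ) :
    PowerSeries.coeff (R := ℚ) m
        ((PowerSeries.mk fun k => (n : ℚ) ^ k / (k.factorial : ℚ)) *
          (PowerSeries.mk fun k => (-1 : ℚ) ^ k * bernoulli k / (k.factorial : ℚ)) ^ (m + 1)) =
      Nat.choose (n + m) m := by
  rw [mkE, show (PowerSeries.mk fun k => (-1 : ℚ) ^ k * bernoulli k / (k.factorial : ℚ)) = Td
    from rfl]
  exact main m n
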